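/- Let k ≤ n and l ≤ m be integers and let f₁, f₂ be Laurent polynomials as in the context, with nonzero extreme coefficients a_k, a_n, b_l, b_m. Then b_l^{−k} · b_m^{n} · Π^{[1]} = (−1)^{k·l + n·m} · a_k^{−l} · a_n^{m} · Π^{[2]}. -/

import Mathlib

open Polynomial

private lemma key0 (k n l m : ℤ) (ak an bl bm : ℂ) (hak0 : ak ≠ 0) (han0 : an ≠ 0)
    (hbl0 : bl ≠ 0) (hbm0 : bm ≠ 0) :
    bl ^ (-k) * bm ^ n *
      (((-1 : ℂ) ^ (m - l) * bl * bm⁻¹) ^ k * an ^ (m - l) * (-1 : ℂ) ^ ((n - k) * (m - l))) =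
    (-1 : ℂ) ^ (k * l + n * m) * ak ^ (-l) * an ^ m *
      (((-1 : ℂ) ^ (n - k) * ak * an⁻¹) ^ l * bm ^ (n - k)) := by
  have hS0 : (-1 : ℂ) ≠ 0 := by norm_num
  rw [mul_zpow, mul_zpow, mul_zpow, mul_zpow, inv_zpow, inv_zpow, ← zpow_neg, ← zpow_neg,
    ← zpow_mul, ← zpow_mul]
  have eL : bl ^ (-k) * bl ^ k = 1 := by rw [← zpow_add₀ hbl0]; norm_num
  have eR : ak ^ (-l) * ak ^ l = 1 := by rw [← zpow_add₀ hak0]; norm_num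
  have ebm : bm ^ n * bm ^ (-k) = bm ^ (n - k) := by
    rw [← zpow_add₀ hbm0, show n + -k = n - k from by ring]
  have ean : an ^ m * an ^ (-l) = an ^ (m - l) := by
    rw [← zpow_add₀ han0, show m + -l = m - l from by ring]
  have h2 : (-1 : ℂ) ^ ((2:ℤ) * (n * l)) = 1 := by rw [zpow_mul]; norm_num
  have eS : (-1:ℂ) ^ ((m - l) * k + (n - k) * (m - l)) =
      (-1:ℂ) ^ (k * l + n * m + (n - k) * l) := by
    rw [show k * l + n * m + (n - k) * l = ((m - l) * k + (n - k) * (m - l)) + 2 * (n * l)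
      from by ring]
    conv_rhs => rw [zpow_add₀ hS0]
    rw [h2, mul_one]
  calc bl ^ (-k) * bm ^ n *
      ((-1:ℂ) ^ ((m - l) * k) * bl ^ k * bm ^ (-k) * an ^ (m - l) *
        (-1:ℂ) ^ ((n - k) * (m - l)))
      = (bl ^ (-k) * bl ^ k) * (bm ^ n * bm ^ (-k)) *
        ((-1:ℂ) ^ ((m - l) * k) * (-1:ℂ) ^ ((n - k) * (m - l))) * an ^ (m - l) := by ring
    _ = bm ^ (n - k) * (-1:ℂ) ^ ((m - l) * k + (n - k) * (m - l)) * an ^ (m - l) := by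
        rw [eL, ebm, ← zpow_add₀ hS0, one_mul]
    _ = bm ^ (n - k) * (-1:ℂ) ^ (k * l + n * m + (n - k) * l) * an ^ (m - l) := by rw [eS]
    _ = (-1 : ℂ) ^ (k * l + n * m) * ak ^ (-l) * an ^ m *
        ((-1:ℂ) ^ ((n - k) * l) * ak ^ l * an ^ (-l) * bm ^ (n - k)) := by
        rw [zpow_add₀ hS0, ← ean]
        linear_combination (-((-1:ℂ) ^ (k * l + n * m) * (-1:ℂ) ^ ((n - k) * l) *
          an ^ m * an ^ (-l) * bm ^ (n - k))) * eR

/-- For Laurent polynomials `f₁ z = z^k * P₁ z` and `f₂ z = z^l * P₂ z`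
with nonzero extreme coefficients `a_k = P₁(0)`, `a_n = leadingCoeff P₁`,
`b_l = P₂(0)`, `b_m = leadingCoeff P₂`, one has
`b_l^{-k} * b_m^n * Π^{[1]} = (-1)^{k l + n m} * a_k^{-l} * a_n^m * Π^{[2]}`,
where `Π^{[1]}` is the product of `f₁` over the roots of `P₂` (with multiplicity)
and `Π^{[2]}` is the product of `f₂` over the roots of `P₁`. -/
theorem stmt0 (k n l m : ℤ) (hkn : k ≤ n) (hlm : l ≤ m)
    (P₁ P₂ : Polynomial ℂ)
    (hd₁ : P₁.natDegree = (n - k).toNat) (hd₂ : P₂.natDegree = (m - l).toNat)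
    (ak an bl bm : ℂ)
    (hak : P₁.coeff 0 = ak) (han : P₁.leadingCoeff = an)
    (hbl : P₂.coeff 0 = bl) (hbm : P₂.leadingCoeff = bm)
    (hak0 : ak ≠ 0) (han0 : an ≠ 0) (hbl0 : bl ≠ 0) (hbm0 : bm ≠ 0) :
    bl ^ (-k) * bm ^ n * (P₂.roots.map fun y => y ^ k * P₁.eval y).prod =
      (-1 : ℂ) ^ (k * l + n * m) * ak ^ (-l) * an ^ m *
        (P₁.roots.map fun x => x ^ l * P₂.eval x).prod := by
  have hs₁ : P₁.Splits := IsAlgClosed.splits P₁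
  have hs₂ : P₂.Splits := IsAlgClosed.splits P₂
  set R₁ := P₁.roots with hR₁
  set R₂ := P₂.roots with hR₂
  have hc₁ : ((Multiset.card R₁ : ℤ)) = n - k := by
    rw [hR₁, (splits_iff_card_roots).mp hs₁, hd₁, Int.toNat_of_nonneg (by omega)]
  have hc₂ : ((Multiset.card R₂ : ℤ)) = m - l := by
    rw [hR₂, (splits_iff_card_roots).mp hs₂, hd₂, Int.toNat_of_nonneg (by omega)]
  have heval₁ : ∀ y : ℂ, P₁.eval y = an * (R₁.map fun x => y - x).prod := by
    intro y
    conv_lhs => rw [hs₁.eq_prod_roots]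
    rw [eval_mul, eval_C, han, eval_multiset_prod, Multiset.map_map]
    simp [Function.comp, hR₁]
  have heval₂ : ∀ x : ℂ, P₂.eval x = bm * (R₂.map fun y => x - y).prod := by
    intro x
    conv_lhs => rw [hs₂.eq_prod_roots]
    rw [eval_mul, eval_C, hbm, eval_multiset_prod, Multiset.map_map]
    simp [Function.comp, hR₂]
  -- signs
  have hsign₁ : ((-1:ℂ)) ^ (Multiset.card R₁) = (-1:ℂ) ^ ((n - k) : ℤ) := by
    rw [← hc₁, zpow_natCast]
  have hsign₂ : ((-1:ℂ)) ^ (Multiset.card R₂) = (-1:ℂ) ^ ((m - l) : ℤ) := by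
    rw [← hc₂, zpow_natCast]
  -- products of roots
  have hss : ((-1:ℂ))^(Multiset.card R₁) * ((-1:ℂ))^(Multiset.card R₁) = 1 := by
    rw [← pow_add]; exact Even.neg_one_pow ⟨_, rfl⟩
  have hss₂ : ((-1:ℂ))^(Multiset.card R₂) * ((-1:ℂ))^(Multiset.card R₂) = 1 := by
    rw [← pow_add]; exact Even.neg_one_pow ⟨_, rfl⟩
  have h01 : ak = an * ((-1:ℂ)^(Multiset.card R₁) * R₁.prod) := by
    rw [← hak, coeff_zero_eq_eval_zero, heval₁ 0]
    congr 1
    simp only [zero_sub]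
    exact Multiset.prod_map_neg R₁
  have h02 : bl = bm * ((-1:ℂ)^(Multiset.card R₂) * R₂.prod) := by
    rw [← hbl, coeff_zero_eq_eval_zero, heval₂ 0]
    congr 1
    simp only [zero_sub]
    exact Multiset.prod_map_neg R₂
  have h3 : an * R₁.prod = (-1:ℂ)^(Multiset.card R₁) * ak := by
    rw [h01]; linear_combination (-(an * R₁.prod)) * hss
  have h4 : bm * R₂.prod = (-1:ℂ)^(Multiset.card R₂) * bl := by
    rw [h02]; linear_combination (-(bm * R₂.prod)) * hss₂
  have hprod₁ : R₁.prod = (-1:ℂ)^((n-k):ℤ) * ak * an⁻¹ := by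
    rw [← hsign₁]
    field_simp
    linear_combination h3
  have hprod₂ : R₂.prod = (-1:ℂ)^((m-l):ℤ) * bl * bm⁻¹ := by
    rw [← hsign₂]
    field_simp
    linear_combination h4
  -- abbreviation for the core double product
  set D : ℂ := (R₁.map fun x => (R₂.map fun y => x - y).prod).prod with hD
  -- expand Π¹
  have e1 : (R₂.map fun y => y ^ k * P₁.eval y).prod
      = R₂.prod ^ k *
        (an ^ (Multiset.card R₂) * (R₂.map fun y => (R₁.map fun x => y - x).prod).prod) := by
    rw [Multiset.prod_map_mul]
    congr 1
    · simpa using Multiset.prod_map_zpow (f := fun i : ℂ => i) (m := R₂) (n := k)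
    · rw [Multiset.map_congr rfl (fun y _ => heval₁ y), Multiset.prod_map_mul]
      congr 1
      rw [Multiset.map_const', Multiset.prod_replicate]
  -- expand Π²
  have e2 : (R₁.map fun x => x ^ l * P₂.eval x).prod
      = R₁.prod ^ l * (bm ^ (Multiset.card R₁) * D) := by
    rw [Multiset.prod_map_mul]
    congr 1
    · simpa using Multiset.prod_map_zpow (f := fun i : ℂ => i) (m := R₁) (n := l)
    · rw [Multiset.map_congr rfl (fun x _ => heval₂ x), Multiset.prod_map_mul]
      congr 1
      rw [Multiset.map_const', Multiset.prod_replicate]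
  -- swap double product
  have e3 : (R₂.map fun y => (R₁.map fun x => y - x).prod).prod
      = (-1:ℂ) ^ (Multiset.card R₁ * Multiset.card R₂) * D := by
    have h1 : ∀ y : ℂ, (R₁.map fun x => y - x).prod
        = (-1:ℂ)^(Multiset.card R₁) * (R₁.map fun x => x - y).prod := by
      intro y
      have hmm : (R₁.map fun x => y - x) = (R₁.map fun x => x - y).map Neg.neg := by
        rw [Multiset.map_map]
        exact Multiset.map_congr rfl (fun x _ => (neg_sub x y).symm)
      rw [hmm]
      simpa [Multiset.card_map] using Multiset.prod_map_neg (R₁.map fun x => x - y)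
    rw [Multiset.map_congr rfl (fun y _ => h1 y), Multiset.prod_map_mul,
      Multiset.map_const', Multiset.prod_replicate, ← pow_mul]
    congr 1
    exact Multiset.prod_map_prod_map R₂ R₁ (f := fun y x => x - y)
  -- nat powers to int powers
  have han' : an ^ (Multiset.card R₂) = an ^ ((m - l) : ℤ) := by rw [← hc₂, zpow_natCast]
  have hbm' : bm ^ (Multiset.card R₁) = bm ^ ((n - k) : ℤ) := by rw [← hc₁, zpow_natCast]
  have hsgn' : ((-1:ℂ)) ^ (Multiset.card R₁ * Multiset.card R₂)
      = (-1:ℂ) ^ (((n - k) * (m - l)) : ℤ) := by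
    rw [show ((n - k) * (m - l) : ℤ) = ((Multiset.card R₁ * Multiset.card R₂ : ℕ) : ℤ) from by
      push_cast [hc₁, hc₂]; ring, zpow_natCast]
  rw [e1, e2, e3, hprod₁, hprod₂, han', hbm', hsgn']
  linear_combination D * key0 k n l m ak an bl bm hak0 han0 hbl0 hbm0
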